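/- (Theorem 1) Let h ∈ ℝⁿ, P > 0, G = (1 + P‖h‖²)·I − P·h·hᵀ, and let a* ∈ ℤⁿ \ {0} minimize aᵀGa. Then either a* is a signed standard unit vector, or there exists x ∈ ℝ such that a* − (1/2)𝟙 < h·x < a* + (1/2)𝟙 componentwise, hence a*_i = round(h_i·x) for all i. -/

import Mathlib

open Matrix BigOperators

private lemma quadform {n : ℕ} (h : Fin n → ℝ) (c P : ℝ)
    (G : Matrix (Fin n) (Fin n) ℝ)
    (hGdef : ∀ i j, G i j = c * (if i = j then 1 else 0) - P * h i * h j)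
    (v : Fin n → ℝ) :
    v ⬝ᵥ G.mulVec v = c * ∑ i, v i ^ 2 - P * (∑ i, h i * v i) ^ 2 := by
  have hmv : ∀ i, G.mulVec v i = c * v i - P * h i * (∑ j, h j * v j) := by
    intro i
    simp only [mulVec, dotProduct, hGdef, sub_mul, Finset.sum_sub_distrib,
      ite_mul, one_mul, zero_mul, Finset.sum_ite_eq, Finset.mem_univ, if_true,
      Finset.mul_sum]
    ring_nf
    congr 1
    · simp [mul_ite, Finset.sum_ite_eq, mul_comm]
  simp only [dotProduct, hmv]
  rw [Finset.sum_congr rfl (fun i _ => by ring :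
    ∀ i ∈ Finset.univ, v i * (c * v i - P * h i * (∑ j, h j * v j)) =
      c * v i ^ 2 - (P * (∑ j, h j * v j)) * (h i * v i))]
  rw [Finset.sum_sub_distrib, ← Finset.mul_sum, ← Finset.mul_sum]
  ring

theorem stmt10 {n : ℕ} (h : Fin n → ℝ) (P : ℝ) (hP : 0 < P)
    (G : Matrix (Fin n) (Fin n) ℝ)
    (hGdef : ∀ i j, G i j =
      (1 + P * ∑ l, (h l) ^ 2) * (if i = j then 1 else 0) - P * h i * h j)
    (a : Fin n → ℤ) (ha : a ≠ 0)
    (hmin : ∀ b : Fin n → ℤ, b ≠ 0 →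
      (fun i => (a i : ℝ)) ⬝ᵥ G.mulVec (fun i => (a i : ℝ)) ≤
      (fun i => (b i : ℝ)) ⬝ᵥ G.mulVec (fun i => (b i : ℝ))) :
    (∃ j, (∀ i, i ≠ j → a i = 0) ∧ (a j = 1 ∨ a j = -1)) ∨
    (∃ x : ℝ, ∀ i,
      ((a i : ℝ) - 1 / 2 < h i * x ∧ h i * x < (a i : ℝ) + 1 / 2) ∧
      a i = round (h i * x)) := by
  by_cases hunit : ∃ j, (∀ i, i ≠ j → a i = 0) ∧ (a j = 1 ∨ a j = -1)
  · exact Or.inl hunit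
  right
  set S : ℝ := ∑ l, (h l) ^ 2 with hSdef
  have hS0 : 0 ≤ S := Finset.sum_nonneg fun l _ => sq_nonneg _
  have hden : (0:ℝ) < 1 + P * S := by nlinarith
  set T : ℝ := ∑ i, h i * (a i : ℝ) with hTdef
  set x : ℝ := P * T / (1 + P * S) with hxdef
  have hx : x * (1 + P * S) = P * T := div_mul_cancel₀ _ (ne_of_gt hden)
  -- key inequality from comparing with a ± e_j
  have key : ∀ (j : Fin n) (s : ℤ), s = 1 ∨ s = -1 →
      0 ≤ (1 + P * S) * (2 * (s:ℝ) * (a j) + 1) - P * (2 * (s:ℝ) * (h j) * T + (h j) ^ 2) := by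
    intro j s hs
    set b : Fin n → ℤ := fun i => a i + (if i = j then s else 0) with hbdef
    have hb0 : b ≠ 0 := by
      intro hb
      apply hunit
      refine ⟨j, fun i hij => ?_, ?_⟩
      · have := congrFun hb i
        simpa [hbdef, hij] using this
      · rcases hs with rfl | rfl
        · right; have hj := congrFun hb j; simp [hbdef] at hj; omega
        · left; have hj := congrFun hb j; simp [hbdef] at hj; omega
    have hle := hmin b hb0
    rw [quadform h _ P G hGdef, quadform h _ P G hGdef] at hle
    have hs2 : (s:ℝ) ^ 2 = 1 := by rcases hs with rfl | rfl <;> norm_num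
    have hsum1 : ∑ i, ((b i : ℝ)) ^ 2 = (∑ i, ((a i : ℝ)) ^ 2) + (2 * (s:ℝ) * (a j) + 1) := by
      have : ∀ i ∈ Finset.univ, ((b i : ℝ)) ^ 2 =
          ((a i : ℝ)) ^ 2 + (if i = j then 2 * (s:ℝ) * (a i) + (s:ℝ)^2 else 0) := by
        intro i _
        by_cases hij : i = j <;> simp [hbdef, hij] <;> push_cast <;> ring
      rw [Finset.sum_congr rfl this, Finset.sum_add_distrib, Finset.sum_ite_eq' Finset.univ j]
      simp [hs2]
    have hsum2 : ∑ i, h i * ((b i : ℝ)) = T + (s:ℝ) * h j := by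
      have : ∀ i ∈ Finset.univ, h i * ((b i : ℝ)) =
          h i * ((a i : ℝ)) + (if i = j then (s:ℝ) * h i else 0) := by
        intro i _
        by_cases hij : i = j <;> simp [hbdef, hij] <;> push_cast <;> ring
      rw [Finset.sum_congr rfl this, Finset.sum_add_distrib, Finset.sum_ite_eq' Finset.univ j]
      simp [hTdef, mul_comm]
    rw [hsum1, hsum2, ← hTdef] at hle
    have hexp : (T + (s:ℝ) * h j) ^ 2 = T ^ 2 + (2 * (s:ℝ) * h j * T + (h j) ^ 2) := by
      linear_combination (h j) ^ 2 * hs2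
    rw [hexp] at hle
    nlinarith [hle]
  refine ⟨x, fun i => ?_⟩
  have k1 := key i 1 (Or.inl rfl)
  have k2 := key i (-1) (Or.inr rfl)
  push_cast at k1 k2
  have hbound : (a i : ℝ) - 1 / 2 < h i * x ∧ h i * x < (a i : ℝ) + 1 / 2 := by
    by_cases hhi : h i = 0
    · have ha1 : (0:ℝ) ≤ 2 * (a i : ℝ) + 1 := by
        have := k1; rw [hhi] at this; nlinarith
      have ha2 : (0:ℝ) ≤ -2 * (a i : ℝ) + 1 := by
        have := k2; rw [hhi] at this; nlinarith
      have : a i = 0 := by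
        have h1 : (-1:ℝ)/2 ≤ (a i : ℝ) := by linarith
        have h2 : (a i : ℝ) ≤ 1/2 := by linarith
        have h1r : ((-1:ℤ):ℝ) < ((a i : ℤ):ℝ) := by push_cast; linarith
        have h2r : ((a i : ℤ):ℝ) < ((1:ℤ):ℝ) := by push_cast; linarith
        have h1' : (-1:ℤ) < a i := by exact_mod_cast h1r
        have h2' : a i < 1 := by exact_mod_cast h2r
        omega
      rw [this, hhi]
      norm_num
    · have hh2 : 0 < h i ^ 2 := by positivity
      have hhx : (h i * x) * (1 + P * S) = P * (h i * T) := by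
        linear_combination h i * hx
      constructor
      · nlinarith [k2, hhx, mul_pos hP hh2, hden]
      · nlinarith [k1, hhx, mul_pos hP hh2, hden]
  refine ⟨hbound, ?_⟩
  rw [round_eq]
  symm
  rw [Int.floor_eq_iff]
  constructor
  · push_cast; linarith [hbound.1]
  · push_cast; linarith [hbound.2]
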